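/- arXiv:1304.1606 — 2 statements merged into one kernel-verified Lean document; each statement's English description precedes it below -/
import Mathlib

section
/- For all real x with -1 < x ≤ 1, the Legendre function of degree -1/2 satisfies P_{-1/2}(x) = (2/π) K(√((1-x)/2)), where K(k) = ∫_0^{π/2} (1 - k² sin²θ)^{-1/2} dθ is the complete elliptic integral of the first kind and P_ν(1-2z) = ₂F₁(-ν, ν+1; 1; z). -/
open Real MeasureTheory intervalIntegral Complex

/-- Complete elliptic integral of the first kind. -/
noncomputable def ellipticK (k : ℝ) : ℝ :=
  ∫ θ in (0:ℝ)..(π/2), (1 - k ^ 2 * Real.sin θ ^ 2) ^ (-(1/2 : ℝ))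

/-- Complete elliptic integral of the second kind. -/
noncomputable def ellipticE (k : ℝ) : ℝ :=
  ∫ θ in (0:ℝ)..(π/2), (1 - k ^ 2 * Real.sin θ ^ 2) ^ ((1/2 : ℝ))

/-- Legendre function of the first kind of degree ν : P_ν(1-2z) = ₂F₁(-ν, ν+1; 1; z). -/
noncomputable def legendreP (ν : ℂ) (x : ℂ) : ℂ :=
  ordinaryHypergeometric (-ν) (ν + 1) 1 ((1 - x) / 2)


section myAux
open Finset Filter Topology


noncomputable def myc : ℕ → ℝ := fun n => (ascPochhammer ℝ n).eval (1/2) / n.factorial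

lemma myc_zero : myc 0 = 1 := by simp [myc]

lemma myc_succ (n : ℕ) : (n + 1 : ℝ) * myc (n + 1) = (n + 1/2) * myc n := by
  have h : (ascPochhammer ℝ (n+1)).eval (1/2) =
      (ascPochhammer ℝ n).eval (1/2) * (1/2 + n) := by
    rw [ascPochhammer_succ_right]
    simp [Polynomial.eval_mul]
  have hf : ((n+1).factorial : ℝ) = (n+1) * n.factorial := by
    push_cast [Nat.factorial_succ]; ring
  have h0 : (n.factorial : ℝ) ≠ 0 := Nat.cast_ne_zero.2 n.factorial_ne_zero
  have h1 : (n : ℝ) + 1 ≠ 0 := by positivity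
  simp only [myc]
  rw [h, hf]
  field_simp
  ring

lemma myc_pos (n : ℕ) : 0 < myc n := by
  induction n with
  | zero => rw [myc_zero]; norm_num
  | succ n ih =>
    nlinarith [myc_succ n, (by positivity : (0:ℝ) < (n:ℝ) + 1)]

lemma myc_le_one (n : ℕ) : myc n ≤ 1 := by
  induction n with
  | zero => simp [myc_zero]
  | succ n ih =>
    have h := myc_succ n
    have hp := myc_pos n
    have h1 : (0:ℝ) < (n:ℝ) + 1 := by positivity
    nlinarith

lemma myc_conv (n : ℕ) : ∑ k ∈ range (n+1), myc k * myc (n - k) = 1 := by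
  induction n with
  | zero => simp [myc_zero]
  | succ n ih =>
    have key : ((n:ℝ) + 1) * ∑ k ∈ range (n+2), myc k * myc (n+1-k)
        = ((n:ℝ) + 1) * ∑ k ∈ range (n+1), myc k * myc (n-k) := by
      have refl1 : ∑ k ∈ range (n+2), ((n+1-k : ℕ) : ℝ) * (myc k * myc (n+1-k))
          = ∑ k ∈ range (n+2), (k : ℝ) * (myc k * myc (n+1-k)) := by
        rw [← Finset.sum_range_reflect (fun k => (k:ℝ) * (myc k * myc (n+1-k))) (n+2)]
        refine Finset.sum_congr rfl fun k hk => ?_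
        have hk' : k ≤ n + 1 := by simpa [Nat.lt_succ_iff] using Finset.mem_range.1 hk
        have e1 : n + 2 - 1 - k = n + 1 - k := by omega
        have e2 : n + 1 - (n + 1 - k) = k := by omega
        rw [e1, e2]
        ring
      have split : ∀ k ∈ range (n+2), ((n:ℝ)+1) * (myc k * myc (n+1-k))
          = (k:ℝ) * (myc k * myc (n+1-k)) + ((n+1-k : ℕ):ℝ) * (myc k * myc (n+1-k)) := by
        intro k hk
        have hk' : k ≤ n + 1 := by simpa [Nat.lt_succ_iff] using Finset.mem_range.1 hk
        have : ((n+1-k : ℕ):ℝ) = (n:ℝ) + 1 - k := by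
          push_cast [Nat.cast_sub hk']; ring
        rw [this]; ring
      have step1 : ((n:ℝ) + 1) * ∑ k ∈ range (n+2), myc k * myc (n+1-k)
          = 2 * ∑ k ∈ range (n+2), (k:ℝ) * (myc k * myc (n+1-k)) := by
        rw [Finset.mul_sum, Finset.sum_congr rfl split, Finset.sum_add_distrib, refl1]
        ring
      have step2 : ∑ k ∈ range (n+2), (k:ℝ) * (myc k * myc (n+1-k))
          = ∑ k ∈ range (n+1), ((k:ℝ) + 1/2) * (myc k * myc (n-k)) := by
        rw [Finset.sum_range_succ' (fun k => (k:ℝ) * (myc k * myc (n+1-k))) (n+1)]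
        simp only [Nat.cast_zero, zero_mul, add_zero]
        refine Finset.sum_congr rfl fun k hk => ?_
        have h := myc_succ k
        have e1 : n + 1 - (k + 1) = n - k := by omega
        rw [e1]
        push_cast
        rw [show ((k:ℝ)+1)*(myc (k+1) * myc (n-k)) = (((k:ℝ)+1)*myc (k+1)) * myc (n-k) from by ring, h]
        ring
      have refl2 : ∑ k ∈ range (n+1), (2*(k:ℝ) + 1) * (myc k * myc (n-k))
          = ∑ k ∈ range (n+1), (2*((n-k : ℕ):ℝ) + 1) * (myc k * myc (n-k)) := by
        rw [← Finset.sum_range_reflect (fun k => (2*(k:ℝ)+1) * (myc k * myc (n-k))) (n+1)]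
        refine Finset.sum_congr rfl fun k hk => ?_
        have hk' : k ≤ n := by simpa [Nat.lt_succ_iff] using Finset.mem_range.1 hk
        have e1 : n + 1 - 1 - k = n - k := by omega
        have e2 : n - (n - k) = k := by omega
        rw [e1, e2]
        ring
      have step3 : 2 * ∑ k ∈ range (n+1), ((k:ℝ) + 1/2) * (myc k * myc (n-k))
          = ((n:ℝ) + 1) * ∑ k ∈ range (n+1), myc k * myc (n-k) := by
        have comb : ∑ k ∈ range (n+1), (2*(k:ℝ) + 1) * (myc k * myc (n-k))
              + ∑ k ∈ range (n+1), (2*(k:ℝ) + 1) * (myc k * myc (n-k))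
            = ∑ k ∈ range (n+1), (2*(n:ℝ) + 2) * (myc k * myc (n-k)) := by
          nth_rewrite 2 [refl2]
          rw [← Finset.sum_add_distrib]
          refine Finset.sum_congr rfl fun k hk => ?_
          have hk' : k ≤ n := by simpa [Nat.lt_succ_iff] using Finset.mem_range.1 hk
          have : ((n-k : ℕ):ℝ) = (n:ℝ) - k := by push_cast [Nat.cast_sub hk']; ring
          rw [this]; ring
        have comb2 : ∑ k ∈ range (n+1), (2*(k:ℝ) + 1) * (myc k * myc (n-k))
            = ((n:ℝ)+1) * ∑ k ∈ range (n+1), myc k * myc (n-k) := by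
          have := comb
          rw [← Finset.mul_sum] at this
          linarith
        calc 2 * ∑ k ∈ range (n+1), ((k:ℝ) + 1/2) * (myc k * myc (n-k))
            = ∑ k ∈ range (n+1), (2*(k:ℝ) + 1) * (myc k * myc (n-k)) := by
              rw [Finset.mul_sum]; exact Finset.sum_congr rfl fun k _ => by ring
          _ = _ := comb2
      rw [step1, step2, step3]
    have hne : ((n:ℝ) + 1) ≠ 0 := by positivity
    have := mul_left_cancel₀ hne key
    rw [this, ih]

lemma myc_summable {t : ℝ} (ht0 : 0 ≤ t) (ht1 : t < 1) :
    Summable (fun n => myc n * t ^ n) := by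
  refine Summable.of_nonneg_of_le (fun n => ?_) (fun n => ?_)
    (summable_geometric_of_lt_one ht0 ht1)
  · exact mul_nonneg (myc_pos n).le (pow_nonneg ht0 n)
  · calc myc n * t ^ n ≤ 1 * t ^ n :=
        mul_le_mul_of_nonneg_right (myc_le_one n) (pow_nonneg ht0 n)
      _ = t ^ n := one_mul _

lemma myc_binomial {t : ℝ} (ht0 : 0 ≤ t) (ht1 : t < 1) :
    HasSum (fun n => myc n * t ^ n) ((1 - t) ^ (-(1/2) : ℝ)) := by
  have hsum := myc_summable ht0 ht1
  set s := ∑' n, myc n * t ^ n with hs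
  have hnorm : Summable (fun n => ‖myc n * t ^ n‖) := by
    refine hsum.congr fun n => ?_
    rw [Real.norm_of_nonneg (mul_nonneg (myc_pos n).le (pow_nonneg ht0 n))]
  have hsq : s * s = (1 - t)⁻¹ := by
    rw [hs, tsum_mul_tsum_eq_tsum_sum_range_of_summable_norm hnorm hnorm]
    have : ∀ n : ℕ, ∑ k ∈ range (n+1), (myc k * t ^ k) * (myc (n-k) * t ^ (n-k))
        = t ^ n := by
      intro n
      have : ∀ k ∈ range (n+1), (myc k * t ^ k) * (myc (n-k) * t ^ (n-k))
          = (myc k * myc (n-k)) * t ^ n := by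
        intro k hk
        have hk' : k ≤ n := by simpa [Nat.lt_succ_iff] using Finset.mem_range.1 hk
        rw [show (myc k * t ^ k) * (myc (n-k) * t ^ (n-k))
            = (myc k * myc (n-k)) * (t ^ k * t ^ (n-k)) from by ring,
          ← pow_add, Nat.add_sub_cancel' hk']
      rw [Finset.sum_congr rfl this, ← Finset.sum_mul, myc_conv, one_mul]
    rw [tsum_congr this, tsum_geometric_of_lt_one ht0 ht1]
  have hspos : 0 ≤ s := tsum_nonneg fun n => mul_nonneg (myc_pos n).le (pow_nonneg ht0 n)
  have h1t : (0:ℝ) < 1 - t := by linarith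
  have hr : s = (1 - t) ^ (-(1/2) : ℝ) := by
    have hr2 : ((1 - t) ^ (-(1/2) : ℝ)) ^ 2 = (1 - t)⁻¹ := by
      rw [← Real.rpow_natCast ((1 - t) ^ (-(1/2) : ℝ)) 2, ← Real.rpow_mul h1t.le]
      norm_num [Real.rpow_neg_one]
    have hrpos : (0:ℝ) ≤ (1 - t) ^ (-(1/2) : ℝ) := Real.rpow_nonneg h1t.le _
    have : s ^ 2 = ((1 - t) ^ (-(1/2) : ℝ)) ^ 2 := by rw [hr2, sq, hsq]
    calc s = Real.sqrt (s ^ 2) := (Real.sqrt_sq hspos).symm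
      _ = Real.sqrt (((1 - t) ^ (-(1/2) : ℝ)) ^ 2) := by rw [this]
      _ = (1 - t) ^ (-(1/2) : ℝ) := Real.sqrt_sq hrpos
  exact hr ▸ hsum.hasSum

lemma wallis (n : ℕ) : ∫ θ in (0:ℝ)..(π/2), Real.sin θ ^ (2*n) = π/2 * myc n := by
  induction n with
  | zero => simp [myc_zero]
  | succ n ih =>
    have h2 : 2 * (n+1) = 2*n + 2 := by ring
    rw [h2, integral_sin_pow (2*n)]
    rw [ih]
    have hs : Real.sin (0:ℝ) = 0 := Real.sin_zero
    have hc : Real.cos (π/2) = 0 := Real.cos_pi_div_two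
    rw [hs, hc]
    have h := myc_succ n
    have h1 : ((2*n:ℕ):ℝ) + 2 ≠ 0 := by positivity
    have hn1 : (n:ℝ) + 1 ≠ 0 := by positivity
    push_cast
    rw [zero_pow (by omega), mul_zero, zero_mul, zero_sub, neg_zero, zero_div, zero_add]
    field_simp at h ⊢
    linear_combination (-1) * h

lemma ellipticK_series {z : ℝ} (hz0 : 0 ≤ z) (hz1 : z < 1) :
    ellipticK (Real.sqrt z) = π/2 * ∑' n, myc n ^ 2 * z ^ n := by
  have hsq : Real.sqrt z ^ 2 = z := Real.sq_sqrt hz0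
  -- pointwise facts
  have hzt : ∀ θ : ℝ, 0 ≤ z * Real.sin θ ^ 2 ∧ z * Real.sin θ ^ 2 < 1 := by
    intro θ
    constructor
    · positivity
    · calc z * Real.sin θ ^ 2 ≤ z * 1 := by
            have := Real.sin_sq_le_one θ
            nlinarith
        _ < 1 := by linarith
  -- the partial sums
  set F : ℕ → ℝ → ℝ := fun N θ => ∑ n ∈ range N, myc n * (z * Real.sin θ ^ 2) ^ n with hF
  have hFcont : ∀ N, Continuous (F N) := by
    intro N
    exact continuous_finset_sum _ fun n _ => by fun_prop
  have hlim : ∀ θ : ℝ, Tendsto (fun N => F N θ) atTop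
      (𝓝 ((1 - z * Real.sin θ ^ 2) ^ (-(1/2) : ℝ))) := by
    intro θ
    exact (myc_binomial (hzt θ).1 (hzt θ).2).tendsto_sum_nat
  have hbound : ∀ N θ, ‖F N θ‖ ≤ (1 - z) ^ (-(1/2) : ℝ) := by
    intro N θ
    have h1 : 0 ≤ F N θ := Finset.sum_nonneg fun n _ =>
      mul_nonneg (myc_pos n).le (pow_nonneg (hzt θ).1 n)
    rw [Real.norm_of_nonneg h1]
    have h2 : F N θ ≤ (1 - z * Real.sin θ ^ 2) ^ (-(1/2) : ℝ) :=
      Summable.sum_le_tsum (range N) (fun n _ => mul_nonneg (myc_pos n).le (pow_nonneg (hzt θ).1 n))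
        ((myc_binomial (hzt θ).1 (hzt θ).2).summable) |>.trans_eq
        (myc_binomial (hzt θ).1 (hzt θ).2).tsum_eq
    refine h2.trans ?_
    -- antitone of rpow with negative exponent
    have ha : (0:ℝ) < 1 - z := by linarith
    have hb : 1 - z ≤ 1 - z * Real.sin θ ^ 2 := by
      have := Real.sin_sq_le_one θ
      nlinarith
    rw [Real.rpow_neg (by linarith), Real.rpow_neg ha.le]
    refine inv_anti₀ (Real.rpow_pos_of_pos ha _) ?_
    exact Real.rpow_le_rpow ha.le hb (by norm_num)
  -- convergence of integrals
  have hK : Tendsto (fun N => ∫ θ in (0:ℝ)..(π/2), F N θ) atTop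
      (𝓝 (ellipticK (Real.sqrt z))) := by
    unfold ellipticK
    rw [hsq]  -- hope this rewrites k^2
    refine intervalIntegral.tendsto_integral_filter_of_dominated_convergence
      (fun _ => (1 - z) ^ (-(1/2) : ℝ)) ?_ ?_ ?_ ?_
    · exact Eventually.of_forall fun N => (hFcont N).aestronglyMeasurable
    · exact Eventually.of_forall fun N => Eventually.of_forall fun θ _ => hbound N θ
    · exact intervalIntegrable_const
    · exact Eventually.of_forall fun θ _ => hlim θ
  -- compute the integrals of partial sums
  have hInt : ∀ N, ∫ θ in (0:ℝ)..(π/2), F N θ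
      = ∑ n ∈ range N, π/2 * (myc n ^ 2 * z ^ n) := by
    intro N
    simp only [hF]
    rw [intervalIntegral.integral_finset_sum (fun n _ =>
      (Continuous.intervalIntegrable (by fun_prop) _ _))]
    refine Finset.sum_congr rfl fun n _ => ?_
    have : ∀ θ : ℝ, myc n * (z * Real.sin θ ^ 2) ^ n
        = (myc n * z ^ n) * Real.sin θ ^ (2*n) := by
      intro θ
      rw [mul_pow, pow_mul]
      ring
    rw [intervalIntegral.integral_congr (g := fun θ => (myc n * z ^ n) * Real.sin θ ^ (2*n))
      (fun θ _ => this θ), intervalIntegral.integral_const_mul, wallis n]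
    ring
  have hsum2 : Summable (fun n => myc n ^ 2 * z ^ n) := by
    refine Summable.of_nonneg_of_le (fun n => by positivity) (fun n => ?_)
      (myc_summable hz0 hz1)
    have := myc_le_one n
    have := (myc_pos n).le
    have : myc n ^ 2 ≤ myc n := by nlinarith
    exact mul_le_mul_of_nonneg_right this (pow_nonneg hz0 n)
  have hS : Tendsto (fun N => ∑ n ∈ range N, π/2 * (myc n ^ 2 * z ^ n)) atTop
      (𝓝 (π/2 * ∑' n, myc n ^ 2 * z ^ n)) := by
    have := (hsum2.hasSum.mul_left (π/2)).tendsto_sum_nat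
    exact this
  have := hK
  simp only [hInt] at this
  exact tendsto_nhds_unique this hS

lemma poch_cast (n : ℕ) :
    (ascPochhammer ℂ n).eval ((1:ℂ)/2) = Complex.ofReal ((ascPochhammer ℝ n).eval (1/2)) := by
  rw [← ascPochhammer_map (algebraMap ℝ ℂ) n, Polynomial.eval_map,
    show ((1:ℂ)/2) = algebraMap ℝ ℂ (1/2) by norm_num,
    Polynomial.eval₂_at_apply]
  rfl


end myAux

theorem stmt0 (x : ℝ) (h1 : -1 < x) (h2 : x ≤ 1) :
    legendreP (-1/2) (x : ℂ) = ((2 / π) * ellipticK (Real.sqrt ((1 - x) / 2)) : ℝ) := by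
  set z : ℝ := (1 - x) / 2 with hz
  have hz0 : 0 ≤ z := by rw [hz]; linarith
  have hz1 : z < 1 := by rw [hz]; linarith
  have hcoeff : ∀ n : ℕ, ((Nat.factorial n : ℂ)⁻¹ * (ascPochhammer ℂ n).eval (-(-1/2))
      * (ascPochhammer ℂ n).eval ((-1/2) + 1) * ((ascPochhammer ℂ n).eval 1)⁻¹)
      = ((myc n ^ 2 : ℝ) : ℂ) := by
    intro n
    have he : (-(-1/2) : ℂ) = 1/2 := by norm_num
    have he2 : ((-1/2 : ℂ) + 1) = 1/2 := by norm_num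
    have h1' : (ascPochhammer ℂ n).eval (1:ℂ) = (Nat.factorial n : ℂ) := by
      rw [← Nat.cast_factorial]
    have hmyc : myc n = (ascPochhammer ℝ n).eval (1/2) / Nat.factorial n := rfl
    rw [he, he2, poch_cast, h1', hmyc]
    have hfac : ((Nat.factorial n : ℝ) : ℂ) = (Nat.factorial n : ℂ) := by push_cast; rfl
    push_cast
    have h0 : (Nat.factorial n : ℂ) ≠ 0 := Nat.cast_ne_zero.2 n.factorial_ne_zero
    field_simp
  have hzc : ((1 - (x:ℂ)) / 2) = (z : ℝ) := by rw [hz]; push_cast; ring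
  have hL : legendreP (-1/2) (x : ℂ) = ∑' n : ℕ, ((myc n ^ 2 : ℝ) : ℂ) * ((z:ℂ)) ^ n := by
    rw [legendreP, hzc, ordinaryHypergeometric, ordinaryHypergeometric_sum_eq]
    exact tsum_congr fun n => by rw [hcoeff n, smul_eq_mul]
  have hR : ((2 / π) * ellipticK (Real.sqrt z) : ℝ) = (∑' n, myc n ^ 2 * z ^ n : ℝ) := by
    rw [ellipticK_series hz0 hz1]
    have hπ : (π : ℝ) ≠ 0 := Real.pi_ne_zero
    field_simp
  rw [hL, hR, Complex.ofReal_tsum]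
  push_cast
  rfl
end

section
/- For complex ν: d/dx [ (1-x²)^{ν+1} P_ν(x) P_ν(-x) ] = (ν+1)(1-x²)^ν [P_ν(x) P_{ν+1}(-x) - P_ν(-x) P_{ν+1}(x)] for -1 < x < 1. -/
open Real MeasureTheory intervalIntegral Complex

open Nat Polynomial

noncomputable def hgCoef (a b : ℂ) (n : ℕ) : ℂ :=
  (n ! : ℂ)⁻¹ * (ascPochhammer ℂ n).eval a * (ascPochhammer ℂ n).eval b *
    ((ascPochhammer ℂ n).eval 1)⁻¹

lemma radius_ge (a b : ℂ) : 1 ≤ (ordinaryHypergeometricSeries ℂ a b 1).radius := by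
  by_cases h : ∀ kn : ℕ, (kn : ℂ) ≠ -a ∧ (kn : ℂ) ≠ -b ∧ (kn : ℂ) ≠ -(1:ℂ)
  · rw [ordinaryHypergeometricSeries_radius_eq_one (𝔸 := ℂ) a b 1 h]
  · push_neg at h
    obtain ⟨kn, hkn⟩ := h
    rcases em ((kn : ℂ) = -a) with ha | ha
    · have : a = -(kn : ℂ) := by linear_combination ha
      rw [this, ordinaryHypergeometric_radius_top_of_neg_nat₁]
      exact le_top
    rcases em ((kn : ℂ) = -b) with hb | hb
    · have : b = -(kn : ℂ) := by linear_combination hb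
      rw [this, ordinaryHypergeometric_radius_top_of_neg_nat₂]
      exact le_top
    · exfalso
      have h1 := hkn ha hb
      have h2 : ((kn : ℂ) + 1) = 0 := by rw [h1]; ring
      exact Nat.cast_add_one_ne_zero kn h2

lemma mem_ball_of_norm {z : ℂ} (hz : ‖z‖ < 1) : z ∈ Metric.eball (0:ℂ) 1 := by
  rw [Metric.mem_eball, edist_zero_right, enorm_eq_nnnorm]
  exact_mod_cast hz

lemma hFPS (a b : ℂ) :
    HasFPowerSeriesOnBall (ordinaryHypergeometric a b 1)
      (ordinaryHypergeometricSeries ℂ a b 1) 0 1 := by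
  have h0 : (0:ENNReal) < (ordinaryHypergeometricSeries ℂ a b 1).radius :=
    lt_of_lt_of_le one_pos (radius_ge a b)
  exact ((ordinaryHypergeometricSeries ℂ a b 1).hasFPowerSeriesOnBall h0).mono one_pos
    (radius_ge a b)

lemma sumF (a b : ℂ) {z : ℂ} (hz : ‖z‖ < 1) :
    HasSum (fun n => hgCoef a b n * z ^ n) (ordinaryHypergeometric a b 1 z) := by
  have := (hFPS a b).hasSum (mem_ball_of_norm hz)
  rw [zero_add] at this
  refine this.congr_fun fun n => ?_  -- maybe wrong name
  rw [ordinaryHypergeometricSeries_apply_eq, smul_eq_mul, hgCoef]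

lemma inv_sandwich (K X : ℂ) (h : K ≠ 0) : K⁻¹ * X * K⁻¹ * K ^ 2 = X := by
  have h2 : K⁻¹ * X * K⁻¹ * K ^ 2 = X * (K⁻¹ * K) * (K⁻¹ * K) := by ring
  rw [h2, inv_mul_cancel₀ h, mul_one, mul_one]

lemma inv_sandwich2 (K X Y : ℂ) (h : K ≠ 0) : K⁻¹ * X * Y * K⁻¹ * K ^ 2 = X * Y := by
  have h2 : K⁻¹ * X * Y * K⁻¹ * K ^ 2 = X * Y * (K⁻¹ * K) * (K⁻¹ * K) := by ring
  rw [h2, inv_mul_cancel₀ h, mul_one, mul_one]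

lemma hgCoef_zero (a b : ℂ) : hgCoef a b 0 = 1 := by simp [hgCoef]

lemma hgCoef_mul_sq (a b : ℂ) (n : ℕ) :
    hgCoef a b n * ((n ! : ℂ)) ^ 2 = (ascPochhammer ℂ n).eval a * (ascPochhammer ℂ n).eval b := by
  have hfac : ((n ! : ℂ)) ≠ 0 := Nat.cast_ne_zero.mpr n.factorial_ne_zero
  simp only [hgCoef, ascPochhammer_eval_one]
  exact inv_sandwich2 _ _ _ hfac

lemma hgCoef_succ_mul (a b : ℂ) (n : ℕ) :
    hgCoef a b (n + 1) * (((n : ℂ) + 1) * (n ! : ℂ)) ^ 2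
      = (ascPochhammer ℂ n).eval a * (a + n) * ((ascPochhammer ℂ n).eval b * (b + n)) := by
  have hfac : ((n ! : ℂ)) ≠ 0 := Nat.cast_ne_zero.mpr n.factorial_ne_zero
  have hn1 : ((n : ℂ) + 1) ≠ 0 := Nat.cast_add_one_ne_zero n
  have hfs : ((n + 1)! : ℂ) = ((n : ℂ) + 1) * (n ! : ℂ) := by
    push_cast [Nat.factorial_succ]; ring
  have hne : ((n + 1)! : ℂ) ≠ 0 := Nat.cast_ne_zero.mpr (n + 1).factorial_ne_zero
  simp only [hgCoef, ascPochhammer_succ_eval, ascPochhammer_eval_one]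
  rw [← hfs, show ((n ! : ℂ) * (1 + (n : ℂ))) = ((n + 1)! : ℂ) from by
    push_cast [Nat.factorial_succ]; ring]
  exact inv_sandwich2 _ _ _ hne

lemma recA (ν : ℂ) (n : ℕ) :
    ((n : ℂ) + 1) ^ 2 * hgCoef (-ν) (ν + 1) (n + 1)
      = ((n : ℂ) - ν) * (ν + 1 + n) * hgCoef (-ν) (ν + 1) n := by
  have hfac : ((n ! : ℂ)) ≠ 0 := Nat.cast_ne_zero.mpr n.factorial_ne_zero
  apply mul_right_cancel₀ (pow_ne_zero 2 hfac)
  have h1 := hgCoef_succ_mul (-ν) (ν + 1) n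
  have h2 := hgCoef_mul_sq (-ν) (ν + 1) n
  linear_combination h1 - ((n : ℂ) - ν) * (ν + 1 + n) * h2

lemma recB (ν : ℂ) (n : ℕ) :
    (ν + 1) * (((n : ℂ) + 1) ^ 2 * hgCoef (-(ν + 1)) (ν + 1 + 1) (n + 1))
      = -((ν + 1) * (ν + 1 + n) * (ν + 1 + n + 1)) * hgCoef (-ν) (ν + 1) n := by
  have hfac : ((n ! : ℂ)) ≠ 0 := Nat.cast_ne_zero.mpr n.factorial_ne_zero
  have hn1 : ((n : ℂ) + 1) ≠ 0 := Nat.cast_add_one_ne_zero n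
  apply mul_right_cancel₀ (pow_ne_zero 2 hfac)
  have e1 : (ascPochhammer ℂ (n + 1)).eval (-(ν + 1))
      = (-(ν + 1)) * (ascPochhammer ℂ n).eval (-ν) := by
    rw [ascPochhammer_succ_left]
    simp only [eval_mul, eval_X, eval_comp, eval_add, eval_one]
    norm_num
  have e2 : (ν + 1) * (ascPochhammer ℂ (n + 1)).eval (ν + 1 + 1)
      = (ascPochhammer ℂ n).eval (ν + 1) * (ν + 1 + n) * (ν + 1 + (n + 1)) := by
    have h3 : (ascPochhammer ℂ (n + 2)).eval (ν + 1)
        = (ν + 1) * (ascPochhammer ℂ (n + 1)).eval (ν + 1 + 1) := by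
      rw [ascPochhammer_succ_left]
      simp only [eval_mul, eval_X, eval_comp, eval_add, eval_one]
    rw [← h3, ascPochhammer_succ_eval, ascPochhammer_succ_eval]
    push_cast
    ring
  -- h3 : (n+1)^2 * (n!)^2 * hgCoef(-(ν+1)) (ν+1+1) (n+1) = (-(ν+1)) * Pa * E2
  have h3 : hgCoef (-(ν + 1)) (ν + 1 + 1) (n + 1) * (((n : ℂ) + 1) * (n ! : ℂ)) ^ 2
      = (-(ν + 1)) * (ascPochhammer ℂ n).eval (-ν)
        * (ascPochhammer ℂ (n + 1)).eval (ν + 1 + 1) := by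
    have hfs : ((n + 1)! : ℂ) = ((n : ℂ) + 1) * (n ! : ℂ) := by
      push_cast [Nat.factorial_succ]; ring
    have hne : ((n + 1)! : ℂ) ≠ 0 := Nat.cast_ne_zero.mpr (n + 1).factorial_ne_zero
    simp only [hgCoef, ascPochhammer_eval_one, e1]
    rw [← hfs]
    exact inv_sandwich2 _ _ _ hne
  have h4 := hgCoef_mul_sq (-ν) (ν + 1) n
  linear_combination (ν + 1) * h3 + (-(ν + 1)) * (ascPochhammer ℂ n).eval (-ν) * e2
    + ((ν + 1) * (ν + 1 + n) * (ν + 1 + n + 1)) * h4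

lemma coefId (ν : ℂ) (n : ℕ) :
    -2 * ((n : ℂ) + 1) * hgCoef (-ν) (ν + 1) (n + 1) + 2 * n * hgCoef (-ν) (ν + 1) n
      = (ν + 1) * hgCoef (-ν) (ν + 1) (n + 1) - 2 * (ν + 1) * hgCoef (-ν) (ν + 1) n
        - (ν + 1) * hgCoef (-(ν + 1)) (ν + 1 + 1) (n + 1) := by
  have hn1 : ((n : ℂ) + 1) ^ 2 ≠ 0 := pow_ne_zero 2 (Nat.cast_add_one_ne_zero n)
  apply mul_left_cancel₀ hn1
  linear_combination (-2 * ((n : ℂ) + 1) - (ν + 1)) * recA ν n + recB ν n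


set_option maxHeartbeats 1000000 in
lemma derivF (a b : ℂ) {z : ℂ} (hz : ‖z‖ < 1) (hz0 : z ≠ 0) :
    ∃ d, HasDerivAt (ordinaryHypergeometric a b 1 : ℂ → ℂ) d z ∧
      HasSum (fun n : ℕ => ((n : ℂ) + 1) * hgCoef a b (n+1) * z ^ n) d := by
  have hb := hFPS a b
  have hmem := mem_ball_of_norm hz
  have hdiff : HasDerivAt (ordinaryHypergeometric a b 1 : ℂ → ℂ)
      (deriv (ordinaryHypergeometric a b 1) z) z :=
    (hb.analyticAt_of_mem hmem).differentiableAt.hasDerivAt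
  refine ⟨_, hdiff, ?_⟩
  have hs := (hb.fderiv).hasSum hmem
  rw [zero_add] at hs
  have hs2 := hs.mapL (ContinuousLinearMap.apply ℂ ℂ (1 : ℂ))
  have hval : (ContinuousLinearMap.apply ℂ ℂ (1 : ℂ))
      (fderiv ℂ (ordinaryHypergeometric a b 1) z) = deriv (ordinaryHypergeometric a b 1) z := rfl
  rw [hval] at hs2
  refine hs2.congr_fun fun n => ?_
  have hdiag := (ordinaryHypergeometricSeries ℂ a b 1).derivSeries_apply_diag n z
  set L := ((ordinaryHypergeometricSeries ℂ a b 1).derivSeries n fun _ => z) with hL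
  have h1 : L z = z * L 1 := by
    have : L (z • (1:ℂ)) = z • L 1 := L.map_smul z 1
    simpa using this
  have h2 : z * L 1 = (n + 1) • (ordinaryHypergeometricSeries ℂ a b 1 (n+1) fun _ => z) := by
    rw [← h1, hdiag]
  rw [ordinaryHypergeometricSeries_apply_eq] at h2
  have : (ContinuousLinearMap.apply ℂ ℂ (1:ℂ)) L = L 1 := rfl
  rw [this]
  have hcoef : (n + 1) • ((((n+1)! : ℂ)⁻¹ * (ascPochhammer ℂ (n+1)).eval a *
      (ascPochhammer ℂ (n+1)).eval b * ((ascPochhammer ℂ (n+1)).eval 1)⁻¹) • z ^ (n+1))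
      = ((n:ℂ)+1) * hgCoef a b (n+1) * z^(n+1) := by
    rw [nsmul_eq_mul, smul_eq_mul, hgCoef]
    push_cast
    ring
  rw [hcoef] at h2
  rw [pow_succ] at h2
  exact (mul_left_cancel₀ hz0 (h2.trans (by ring))).symm
lemma hasSum_shift1 (f : ℕ → ℂ) (s : ℂ) (hf0 : f 0 = 0)
    (h : HasSum (fun n => f (n + 1)) s) : HasSum f s := by
  refine (hasSum_nat_add_iff' 1).mp ?_
  simpa [hf0] using h

lemma hasSum_shift2 (f : ℕ → ℂ) (s : ℂ) (hf0 : f 0 = 0) (hf1 : f 1 = 0)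
    (h : HasSum (fun n => f (n + 2)) s) : HasSum f s := by
  refine (hasSum_nat_add_iff' 2).mp ?_
  simpa [hf0, hf1, Finset.sum_range_succ] using h

lemma legendre_rec (ν : ℂ) {z : ℂ} (hz : ‖z‖ < 1) (hz0 : z ≠ 0) :
    ∃ d, HasDerivAt (ordinaryHypergeometric (-ν) (ν + 1) 1 : ℂ → ℂ) d z ∧
      -2 * z * (1 - z) * d
        = (ν + 1) * ((1 - 2 * z) * ordinaryHypergeometric (-ν) (ν + 1) 1 z
            - ordinaryHypergeometric (-(ν + 1)) (ν + 1 + 1) 1 z) := by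
  obtain ⟨d, hd, hs⟩ := derivF (-ν) (ν + 1) hz hz0
  refine ⟨d, hd, ?_⟩
  have hF := sumF (-ν) (ν + 1) hz
  have hG := sumF (-(ν + 1)) (ν + 1 + 1) hz
  set A : ℕ → ℂ := hgCoef (-ν) (ν + 1) with hA
  set B : ℕ → ℂ := hgCoef (-(ν + 1)) (ν + 1 + 1) with hB
  set F : ℂ := ordinaryHypergeometric (-ν) (ν + 1) 1 z with hFdef
  set G : ℂ := ordinaryHypergeometric (-(ν + 1)) (ν + 1 + 1) 1 z with hGdef
  set f : ℕ → ℂ := fun n =>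
    -2 * (n : ℂ) * A n * z ^ n + 2 * ((n - 1 : ℕ) : ℂ) * A (n - 1) * z ^ n with hf
  have hg1 : HasSum (fun n : ℕ => -2 * (n : ℂ) * A n * z ^ n) (-2 * z * d) := by
    apply hasSum_shift1 _ _ (by norm_num)
    refine (hs.mul_left (-2 * z)).congr_fun fun n => ?_
    push_cast
    ring
  have hg2 : HasSum (fun n : ℕ => 2 * ((n - 1 : ℕ) : ℂ) * A (n - 1) * z ^ n)
      (2 * z ^ 2 * d) := by
    apply hasSum_shift2 _ _ (by norm_num) (by norm_num)
    refine (hs.mul_left (2 * z ^ 2)).congr_fun fun n => ?_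
    have h21 : n + 2 - 1 = n + 1 := by omega
    rw [h21]
    push_cast
    ring
  have hfL : HasSum f (-2 * z * d + 2 * z ^ 2 * d) := hg1.add hg2
  -- right-hand side decomposition
  have hr1 : HasSum (fun n : ℕ => (ν + 1) * (A n * z ^ n)) ((ν + 1) * F) :=
    hF.mul_left _
  have hr3 : HasSum (fun n : ℕ => -(ν + 1) * (B n * z ^ n)) (-(ν + 1) * G) :=
    hG.mul_left _
  have hr2 : HasSum (fun n : ℕ => f n - (ν + 1) * (A n * z ^ n) - (-(ν + 1)) * (B n * z ^ n))
      (-2 * (ν + 1) * z * F) := by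
    apply hasSum_shift1 _ _ ?_
    · refine (hF.mul_left (-2 * (ν + 1) * z)).congr_fun fun n => ?_
      simp only [hf]
      have h11 : n + 1 - 1 = n := by omega
      rw [h11]
      have hid := coefId ν n
      push_cast
      linear_combination z ^ (n + 1) * hid
    · have hA0 : A 0 = 1 := hgCoef_zero _ _
      have hB0 : B 0 = 1 := hgCoef_zero _ _
      simp only [hf, hA0, hB0, pow_zero, Nat.cast_zero]
      ring
  have hfR : HasSum f ((ν + 1) * F + -2 * (ν + 1) * z * F + -(ν + 1) * G) := by
    have := (hr1.add hr2).add hr3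
    refine this.congr_fun fun n => ?_
    ring
  have huniq := hfL.unique hfR
  linear_combination huniq

theorem stmt14 (ν : ℂ) (x : ℝ) (h1 : -1 < x) (h2 : x < 1) :
    HasDerivAt (fun y : ℝ => ((1 - (y:ℂ) ^ 2) ^ (ν + 1)) * legendreP ν (y : ℂ) *
        legendreP ν (-(y : ℂ)))
      ((ν + 1) * ((1 - (x:ℂ) ^ 2) ^ ν) *
        (legendreP ν (x : ℂ) * legendreP (ν + 1) (-(x : ℂ)) -
          legendreP ν (-(x : ℂ)) * legendreP (ν + 1) (x : ℂ))) x := by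
  have hx2 : (0:ℝ) < 1 - x ^ 2 := by nlinarith
  have h1x : ‖(1 - (x:ℂ)) / 2‖ < 1 := by
    rw [show (1 - (x:ℂ)) / 2 = (((1 - x) / 2 : ℝ) : ℂ) from by push_cast; ring,
      Complex.norm_real]
    rw [Real.norm_eq_abs, abs_lt]
    constructor <;> linarith
  have h2x : ‖(1 - -(x:ℂ)) / 2‖ < 1 := by
    rw [show (1 - -(x:ℂ)) / 2 = (((1 + x) / 2 : ℝ) : ℂ) from by push_cast; ring,
      Complex.norm_real]
    rw [Real.norm_eq_abs, abs_lt]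
    constructor <;> linarith
  have hz1 : (1 - (x:ℂ)) / 2 ≠ 0 := by
    rw [show (1 - (x:ℂ)) / 2 = (((1 - x) / 2 : ℝ) : ℂ) from by push_cast; ring]
    exact Complex.ofReal_ne_zero.mpr (by linarith)
  have hz2 : (1 - -(x:ℂ)) / 2 ≠ 0 := by
    rw [show (1 - -(x:ℂ)) / 2 = (((1 + x) / 2 : ℝ) : ℂ) from by push_cast; ring]
    exact Complex.ofReal_ne_zero.mpr (by linarith)
  obtain ⟨d₁, hd₁, he₁⟩ := legendre_rec ν h1x hz1
  obtain ⟨d₂, hd₂, he₂⟩ := legendre_rec ν h2x hz2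
  have hinner1 : HasDerivAt (fun y : ℂ => (1 - y) / 2) (-1 / 2) (x:ℂ) := by
    simpa using ((hasDerivAt_id (x:ℂ)).const_sub 1).div_const 2
  have hinner2 : HasDerivAt (fun y : ℂ => (1 - -y) / 2) (1 / 2) (x:ℂ) := by
    have h := ((hasDerivAt_neg (x:ℂ)).const_sub 1).div_const 2
    simpa using h
  have hP : HasDerivAt (fun y : ℂ => legendreP ν y) (d₁ * (-1 / 2)) (x:ℂ) := by
    have h := hd₁.comp (x:ℂ) hinner1
    exact h
  have hQ : HasDerivAt (fun y : ℂ => legendreP ν (-y)) (d₂ * (1 / 2)) (x:ℂ) := by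
    have h := hd₂.comp (x:ℂ) hinner2
    exact h
  have hne0 : (1 - (x:ℂ) ^ 2) ≠ 0 := by
    rw [show (1 - (x:ℂ) ^ 2) = (((1 - x ^ 2 : ℝ)) : ℂ) from by push_cast; ring]
    exact Complex.ofReal_ne_zero.mpr (by linarith)
  have hslit : (1 - (x:ℂ) ^ 2) ∈ Complex.slitPlane := by
    rw [show (1 - (x:ℂ) ^ 2) = (((1 - x ^ 2 : ℝ)) : ℂ) from by push_cast; ring]
    exact Complex.ofReal_mem_slitPlane.mpr hx2
  have hbase : HasDerivAt (fun y : ℂ => 1 - y ^ 2) (-(2 * (x:ℂ))) (x:ℂ) := by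
    have h := (hasDerivAt_pow 2 (x:ℂ)).const_sub 1
    simpa using h
  have hA : HasDerivAt (fun y : ℂ => (1 - y ^ 2) ^ (ν + 1))
      ((ν + 1) * (1 - (x:ℂ) ^ 2) ^ (ν + 1 - 1) * -(2 * (x:ℂ))) (x:ℂ) :=
    hbase.cpow_const hslit
  have htot := ((hA.mul hP).mul hQ).comp_ofReal
  convert htot using 1
  · rfl
  simp only [legendreP, add_sub_cancel_right, Pi.mul_apply]
  rw [show (1 - (x:ℂ) ^ 2) ^ (ν + 1) = (1 - (x:ℂ) ^ 2) ^ ν * (1 - (x:ℂ) ^ 2) from by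
    rw [Complex.cpow_add _ _ hne0, Complex.cpow_one]]
  linear_combination (-((1 - (x:ℂ) ^ 2) ^ ν * ordinaryHypergeometric (-ν) (ν + 1) 1
      ((1 - -(x:ℂ)) / 2))) * he₁
    + ((1 - (x:ℂ) ^ 2) ^ ν * ordinaryHypergeometric (-ν) (ν + 1) 1
      ((1 - (x:ℂ)) / 2)) * he₂
end
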